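/- Fix a degree parameter d ≥ 0 and a dimension k divisible by 10(d+1). There exist positive integer weights w_1,…,w_k with total weight W = Σ w_j, and a set S ⊆ {0,1}^k of size at most O_d(k^d), such that: (1) every point y ∈ S satisfies |Σ_j w_j y_j − W/2| ≤ W/2^{Ω(k/(d+1))}; and (2) for every Abelian group G and every non-zero polynomial Q of degree at most d from {0,1}^k to G, there is a point z ∈ S with Q(z) ≠ 0. -/

import Mathlib

open Finset

universe u

/-- Evaluation of a multilinear polynomial with coefficients `c` over an Abelian
group at a point of the Boolean cube. -/
def evalPoly {G : Type*} [AddCommMonoid G] {n : ℕ} (c : Finset (Fin n) → G)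
    (x : Fin n → Bool) : G :=
  ∑ S : Finset (Fin n), if ∀ i ∈ S, x i = true then c S else 0

namespace Stmt5

variable {k : ℕ}

/-- block width -/
abbrev CC (d : ℕ) : ℕ := 10 * (d + 1)

def lvl (d : ℕ) (j : Fin k) : ℕ := (j : ℕ) / CC d

def wt (d : ℕ) (j : Fin k) : ℕ := 2 ^ lvl d j

def wsum (d : ℕ) (X : Finset (Fin k)) : ℕ := ∑ j ∈ X, wt d j

def msum (d : ℕ) (X : Finset (Fin k)) : ℕ := ∑ j ∈ X, 4 ^ lvl d j

def toB (X : Finset (Fin k)) : Fin k → Bool := fun j => decide (j ∈ X)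

lemma toB_iff (X : Finset (Fin k)) (S : Finset (Fin k)) :
    (∀ i ∈ S, toB X i = true) ↔ S ⊆ X := by
  simp [toB, Finset.subset_iff]

lemma evalPoly_toB {G : Type u} [AddCommGroup G] (c : Finset (Fin k) → G) (X : Finset (Fin k)) :
    evalPoly c (toB X) = ∑ S : Finset (Fin k), if S ⊆ X then c S else 0 := by
  unfold evalPoly
  apply Finset.sum_congr rfl
  intro S _
  by_cases h : S ⊆ X
  · rw [if_pos ((toB_iff X S).2 h), if_pos h]
  · rw [if_neg (fun hh => h ((toB_iff X S).1 hh)), if_neg h]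

lemma lvl_lt (d m : ℕ) (hk : k = CC d * m) (j : Fin k) : lvl d j < m :=
  Nat.div_lt_of_lt_mul (lt_of_lt_of_eq j.isLt (by rw [hk, mul_comm]))

lemma geom (m : ℕ) : ∑ l ∈ range m, 2 ^ l = 2 ^ m - 1 := by
  induction m with
  | zero => simp
  | succ n ih =>
    rw [Finset.sum_range_succ, ih]
    have : 1 ≤ 2 ^ n := Nat.one_le_two_pow
    have h2 : (2:ℕ) ^ (n+1) = 2 ^ n + 2 ^ n := by ring
    omega

lemma sum_lvl (d m : ℕ) (hk : k = CC d * m) (X : Finset (Fin k)) (f : ℕ → ℕ) :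
    ∑ j ∈ X, f (lvl d j) = ∑ l ∈ range m, (X.filter (fun j => lvl d j = l)).card * f l := by
  rw [← Finset.sum_fiberwise_of_maps_to (g := lvl d) (t := range m)
    (fun j _ => mem_range.2 (lvl_lt d m hk j)) (fun j => f (lvl d j))]
  apply Finset.sum_congr rfl
  intro l _
  rw [Finset.sum_congr rfl (fun j hj => by rw [(mem_filter.1 hj).2]), Finset.sum_const,
    smul_eq_mul]

lemma card_Lev (d m : ℕ) (hk : k = CC d * m) {l : ℕ} (hl : l < m) :
    ((univ : Finset (Fin k)).filter (fun j => lvl d j = l)).card = CC d := by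
  have hC : 0 < CC d := by positivity
  rw [← Finset.card_range (CC d)]
  have hbnd : ∀ i ∈ range (CC d), CC d * l + i < k := by
    intro i hi
    have hi' : i < CC d := mem_range.1 hi
    calc CC d * l + i < CC d * l + CC d := by omega
      _ = CC d * (l + 1) := by ring
      _ ≤ CC d * m := Nat.mul_le_mul_left _ hl
      _ = k := hk.symm
  refine Finset.card_bij' (fun j _ => (j : ℕ) % CC d)
    (fun i hi => (⟨CC d * l + i, hbnd i hi⟩ : Fin k)) ?_ ?_ ?_ ?_
  · intro j hj
    exact mem_range.2 (Nat.mod_lt _ hC)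
  · intro i hi
    simp only [mem_filter, mem_univ, true_and]
    simp only [lvl]
    rw [Nat.mul_add_div hC, Nat.div_eq_of_lt (mem_range.1 hi)]
    omega
  · intro j hj
    have hlv : (j : ℕ) / CC d = l := (mem_filter.1 hj).2
    apply Fin.ext
    simp only [lvl] at hlv ⊢
    rw [← hlv, Nat.div_add_mod]
  · intro i hi
    simp only
    rw [Nat.mul_add_mod, Nat.mod_eq_of_lt (mem_range.1 hi)]

lemma wsum_univ (d m : ℕ) (hk : k = CC d * m) :
    wsum d (univ : Finset (Fin k)) = CC d * (2 ^ m - 1) := by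
  unfold wsum wt
  rw [sum_lvl d m hk univ (fun l => 2 ^ l)]
  rw [Finset.sum_congr rfl (fun l hl => by rw [card_Lev d m hk (mem_range.1 hl)])]
  rw [← Finset.mul_sum, geom]


structure Cfg (d m : ℕ) (T A : Finset (Fin k)) (P : Fin k → Finset (Fin k)) : Prop where
  disjAT : Disjoint A T
  disjPT : ∀ x ∈ T, Disjoint (P x) T
  disjPA : ∀ x ∈ T, Disjoint (P x) A
  disjPP : ∀ x ∈ T, ∀ y ∈ T, x ≠ y → Disjoint (P x) (P y)
  p0 : ∀ x ∈ T, lvl d x = 0 → P x = ∅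
  pcard : ∀ x ∈ T, 1 ≤ lvl d x → (P x).card = 2
  plvl : ∀ x ∈ T, ∀ j ∈ P x, lvl d j = lvl d x - 1
  wA : wsum d A + wsum d T = 5 * (d + 1) * (2 ^ m - 1)

lemma palloc (d m : ℕ) (hk : k = CC d * m) (T : Finset (Fin k)) (hT : T.card ≤ d) :
    ∀ T' : Finset (Fin k), T' ⊆ T → ∃ P : Fin k → Finset (Fin k),
      (∀ x, x ∉ T' → P x = ∅) ∧
      (∀ x ∈ T', lvl d x = 0 → P x = ∅) ∧
      (∀ x ∈ T', 1 ≤ lvl d x → (P x).card = 2) ∧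
      (∀ x, ∀ j ∈ P x, lvl d j = lvl d x - 1) ∧
      (∀ x ∈ T', Disjoint (P x) T) ∧
      (∀ x ∈ T', ∀ y ∈ T', x ≠ y → Disjoint (P x) (P y)) ∧
      (T'.biUnion P).card ≤ 2 * T'.card := by
  intro T'
  induction T' using Finset.induction_on with
  | empty =>
    intro _
    exact ⟨fun _ => ∅, fun _ _ => rfl, by simp, by simp, by simp, by simp, by simp, by simp⟩
  | @insert a s ha ih =>
    intro hins
    have hsT : s ⊆ T := fun x hx => hins (mem_insert_of_mem hx)
    have haT : a ∈ T := hins (mem_insert_self a s)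
    obtain ⟨P₀, h₀none, h₀z, h₀c, h₀l, h₀T, h₀pp, h₀card⟩ := ih hsT
    have hP₀a : P₀ a = ∅ := h₀none a ha
    by_cases h0 : lvl d a = 0
    · refine ⟨P₀, ?_, ?_, ?_, h₀l, ?_, ?_, ?_⟩
      · intro x hx
        exact h₀none x (fun hxs => hx (mem_insert_of_mem hxs))
      · intro x hx hx0
        by_cases hxa : x = a
        · subst hxa; exact hP₀a
        · exact h₀z x ((mem_insert.1 hx).resolve_left hxa) hx0
      · intro x hx hxl
        by_cases hxa : x = a
        · subst hxa; omega
        · exact h₀c x ((mem_insert.1 hx).resolve_left hxa) hxl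
      · intro x hx
        by_cases hxa : x = a
        · subst hxa; rw [hP₀a]; exact disjoint_bot_left
        · exact h₀T x ((mem_insert.1 hx).resolve_left hxa)
      · intro x hx y hy hxy
        by_cases hxa : x = a
        · subst hxa; rw [hP₀a]; exact disjoint_bot_left
        · by_cases hya : y = a
          · subst hya; rw [hP₀a]; exact disjoint_bot_right
          · exact h₀pp x ((mem_insert.1 hx).resolve_left hxa) y
              ((mem_insert.1 hy).resolve_left hya) hxy
      · rw [Finset.biUnion_insert, hP₀a, Finset.empty_union,
          Finset.card_insert_of_notMem ha]
        omega
    · -- lvl d a ≥ 1 : allocate a fresh pair one level down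
      have hl1 : 1 ≤ lvl d a := by omega
      have hlm : lvl d a - 1 < m := by
        have := lvl_lt d m hk a; omega
      have hcardF : 2 ≤ ((((univ : Finset (Fin k)).filter (fun j => lvl d j = lvl d a - 1)) \
          (T ∪ s.biUnion P₀))).card := by
        have h1 : ((univ : Finset (Fin k)).filter (fun j => lvl d j = lvl d a - 1)).card
            = CC d := card_Lev d m hk hlm
        have h2 : (T ∪ s.biUnion P₀).card ≤ T.card + (s.biUnion P₀).card :=
          card_union_le _ _
        have h3 : s.card ≤ T.card := card_le_card hsT
        have h4 := le_card_sdiff (T ∪ s.biUnion P₀)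
          ((univ : Finset (Fin k)).filter (fun j => lvl d j = lvl d a - 1))
        have h5 : CC d = 10 * (d + 1) := rfl
        omega
      obtain ⟨Q, hQF, hQcard⟩ := Finset.exists_subset_card_eq hcardF
      have hQlvl : ∀ j ∈ Q, lvl d j = lvl d a - 1 := by
        intro j hj
        have := hQF hj
        rw [mem_sdiff, mem_filter] at this
        exact this.1.2
      have hQT : Disjoint Q T := by
        rw [Finset.disjoint_left]
        intro j hj hjT
        have := hQF hj
        rw [mem_sdiff] at this
        exact this.2 (mem_union_left _ hjT)
      have hQP₀ : Disjoint Q (s.biUnion P₀) := by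
        rw [Finset.disjoint_left]
        intro j hj hjP
        have := hQF hj
        rw [mem_sdiff] at this
        exact this.2 (mem_union_right _ hjP)
      have hupd : ∀ x ∈ s, Function.update P₀ a Q x = P₀ x := by
        intro x hxs
        have hxa : x ≠ a := by rintro rfl; exact ha hxs
        exact Function.update_of_ne hxa _ _
      refine ⟨Function.update P₀ a Q, ?_, ?_, ?_, ?_, ?_, ?_, ?_⟩
      · intro x hx
        have hxa : x ≠ a := by rintro rfl; exact hx (mem_insert_self _ _)
        rw [Function.update_of_ne hxa _ _]
        exact h₀none x (fun hxs => hx (mem_insert_of_mem hxs))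
      · intro x hx hx0
        by_cases hxa : x = a
        · subst hxa; omega
        · rw [Function.update_of_ne hxa _ _]
          exact h₀z x ((mem_insert.1 hx).resolve_left hxa) hx0
      · intro x hx hxl
        by_cases hxa : x = a
        · subst hxa; rw [Function.update_self]; exact hQcard
        · rw [Function.update_of_ne hxa _ _]
          exact h₀c x ((mem_insert.1 hx).resolve_left hxa) hxl
      · intro x j hj
        by_cases hxa : x = a
        · subst hxa
          rw [Function.update_self] at hj
          exact hQlvl j hj
        · rw [Function.update_of_ne hxa _ _] at hj
          exact h₀l x j hj
      · intro x hx
        by_cases hxa : x = a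
        · subst hxa; rw [Function.update_self]; exact hQT
        · rw [Function.update_of_ne hxa _ _]
          exact h₀T x ((mem_insert.1 hx).resolve_left hxa)
      · intro x hx y hy hxy
        by_cases hxa : x = a
        · subst hxa
          rw [Function.update_self]
          have hys : y ∈ s := (mem_insert.1 hy).resolve_left (fun h => hxy h.symm)
          rw [hupd y hys]
          exact hQP₀.mono_right (subset_biUnion_of_mem P₀ hys)
        · have hxs : x ∈ s := (mem_insert.1 hx).resolve_left hxa
          rw [hupd x hxs]
          by_cases hya : y = a
          · subst hya
            rw [Function.update_self]
            exact (hQP₀.mono_right (subset_biUnion_of_mem P₀ hxs)).symm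
          · rw [hupd y ((mem_insert.1 hy).resolve_left hya)]
            exact h₀pp x hxs y ((mem_insert.1 hy).resolve_left hya) hxy
      · rw [Finset.biUnion_insert, Function.update_self]
        have hbu : s.biUnion (Function.update P₀ a Q) = s.biUnion P₀ :=
          Finset.biUnion_congr rfl hupd
        rw [hbu, Finset.card_insert_of_notMem ha]
        have := card_union_le Q (s.biUnion P₀)
        omega


lemma config (d m : ℕ) (hk : k = CC d * m) (T : Finset (Fin k)) (hT : T.card ≤ d) :
    ∃ (A : Finset (Fin k)) (P : Fin k → Finset (Fin k)), Cfg d m T A P := by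
  obtain ⟨P, hnone, hz, hc, hl, hPT, hpp, hcard⟩ := palloc d m hk T hT T Finset.Subset.rfl
  have hAl : ∀ l : ℕ, ∃ B : Finset (Fin k),
      B ⊆ ((univ : Finset (Fin k)).filter (fun j => lvl d j = l)) \ (T ∪ T.biUnion P) ∧
      (l < m → B.card = 5 * (d + 1) - (T.filter (fun x => lvl d x = l)).card) := by
    intro l
    by_cases hlm : l < m
    · have h1 : ((univ : Finset (Fin k)).filter (fun j => lvl d j = l)).card = CC d :=
        card_Lev d m hk hlm
      have h2 : (T ∪ T.biUnion P).card ≤ T.card + (T.biUnion P).card := card_union_le _ _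
      have h4 := le_card_sdiff (T ∪ T.biUnion P)
        ((univ : Finset (Fin k)).filter (fun j => lvl d j = l))
      have h5 : CC d = 10 * (d + 1) := rfl
      have hq : 5 * (d + 1) - (T.filter (fun x => lvl d x = l)).card ≤
          (((univ : Finset (Fin k)).filter (fun j => lvl d j = l)) \ (T ∪ T.biUnion P)).card := by
        omega
      obtain ⟨B, hB1, hB2⟩ := Finset.exists_subset_card_eq hq
      exact ⟨B, hB1, fun _ => hB2⟩
    · exact ⟨∅, Finset.empty_subset _, fun h => absurd h hlm⟩
  choose Af hAf1 hAf2 using hAl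
  have hAflvl : ∀ l, ∀ j ∈ Af l, lvl d j = l := by
    intro l j hj
    have := hAf1 l hj
    rw [mem_sdiff, mem_filter] at this
    exact this.1.2
  have hAfout : ∀ l, ∀ j ∈ Af l, j ∉ T ∧ j ∉ T.biUnion P := by
    intro l j hj
    have := hAf1 l hj
    rw [mem_sdiff, mem_union] at this
    exact ⟨fun h => this.2 (Or.inl h), fun h => this.2 (Or.inr h)⟩
  refine ⟨(range m).biUnion Af, P, ?_, hPT, ?_, hpp, hz, hc, fun x _ => hl x, ?_⟩
  · rw [Finset.disjoint_left]
    intro j hj hjT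
    obtain ⟨l, _, hjl⟩ := mem_biUnion.1 hj
    exact (hAfout l j hjl).1 hjT
  · intro x hx
    rw [Finset.disjoint_left]
    intro j hj hjA
    obtain ⟨l, _, hjl⟩ := mem_biUnion.1 hjA
    exact (hAfout l j hjl).2 (mem_biUnion.2 ⟨x, hx, hj⟩)
  · -- weight computation
    have hdisj : (↑(range m) : Set ℕ).PairwiseDisjoint Af := by
      intro l1 _ l2 _ hne
      rw [Function.onFun, Finset.disjoint_left]
      intro j hj1 hj2
      exact hne ((hAflvl l1 j hj1).symm.trans (hAflvl l2 j hj2))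
    have hwA : wsum d ((range m).biUnion Af) = ∑ l ∈ range m, wsum d (Af l) := by
      unfold wsum
      exact Finset.sum_biUnion hdisj
    have hwAl : ∀ l ∈ range m, wsum d (Af l) =
        (5 * (d + 1) - (T.filter (fun x => lvl d x = l)).card) * 2 ^ l := by
      intro l hlm
      unfold wsum wt
      rw [Finset.sum_congr rfl (fun j hj => by rw [hAflvl l j hj]), Finset.sum_const,
        smul_eq_mul, hAf2 l (mem_range.1 hlm)]
    have hwT : wsum d T = ∑ l ∈ range m, (T.filter (fun x => lvl d x = l)).card * 2 ^ l := by
      unfold wsum wt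
      exact sum_lvl d m hk T (fun l => 2 ^ l)
    rw [hwA, hwT, Finset.sum_congr rfl hwAl, ← Finset.sum_add_distrib]
    have : ∀ l ∈ range m,
        (5 * (d + 1) - (T.filter (fun x => lvl d x = l)).card) * 2 ^ l +
          (T.filter (fun x => lvl d x = l)).card * 2 ^ l = 5 * (d + 1) * 2 ^ l := by
      intro l _
      have hle : (T.filter (fun x => lvl d x = l)).card ≤ d :=
        le_trans (card_filter_le _ _) hT
      rw [← add_mul]
      congr 1
      omega
    rw [Finset.sum_congr rfl this, ← Finset.mul_sum, geom]


/-! ### The evaluation points -/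

def zV (A : Finset (Fin k)) (P : Fin k → Finset (Fin k)) (T V : Finset (Fin k)) :
    Finset (Fin k) :=
  A ∪ V ∪ (T \ V).biUnion P

section Core

variable {d m : ℕ} {T A : Finset (Fin k)} {P : Fin k → Finset (Fin k)}

lemma subset_zV_iff (cfg : Cfg d m T A P) {V : Finset (Fin k)} (hV : V ⊆ T)
    (S : Finset (Fin k)) :
    S ⊆ zV A P T V ↔
      (S ∩ T ⊆ V ∧ (∀ x ∈ T, (S ∩ P x).Nonempty → x ∉ V) ∧
        S \ (T ∪ T.biUnion P) ⊆ A) := by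
  constructor
  · intro h
    refine ⟨?_, ?_, ?_⟩
    · intro j hj
      have hjS : j ∈ S := (mem_inter.1 hj).1
      have hjT : j ∈ T := (mem_inter.1 hj).2
      rcases mem_union.1 (h hjS) with h1 | h1
      · rcases mem_union.1 h1 with h2 | h2
        · exact absurd hjT (Finset.disjoint_left.1 cfg.disjAT h2)
        · exact h2
      · obtain ⟨x, hx, hjx⟩ := mem_biUnion.1 h1
        have hxT : x ∈ T := (mem_sdiff.1 hx).1
        exact absurd hjT (Finset.disjoint_left.1 (cfg.disjPT x hxT) hjx)
    · intro x hx ⟨j, hj⟩ hxV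
      have hjS : j ∈ S := (mem_inter.1 hj).1
      have hjP : j ∈ P x := (mem_inter.1 hj).2
      rcases mem_union.1 (h hjS) with h1 | h1
      · rcases mem_union.1 h1 with h2 | h2
        · exact Finset.disjoint_left.1 (cfg.disjPA x hx) hjP h2
        · exact Finset.disjoint_left.1 (cfg.disjPT x hx) hjP (hV h2)
      · obtain ⟨x', hx', hjx'⟩ := mem_biUnion.1 h1
        have hx'T : x' ∈ T := (mem_sdiff.1 hx').1
        have hx'V : x' ∉ V := (mem_sdiff.1 hx').2
        by_cases hxx : x = x'
        · exact hx'V (hxx ▸ hxV)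
        · exact Finset.disjoint_left.1 (cfg.disjPP x hx x' hx'T hxx) hjP hjx'
    · intro j hj
      have hjS : j ∈ S := (mem_sdiff.1 hj).1
      have hjout : j ∉ T ∪ T.biUnion P := (mem_sdiff.1 hj).2
      rcases mem_union.1 (h hjS) with h1 | h1
      · rcases mem_union.1 h1 with h2 | h2
        · exact h2
        · exact absurd (mem_union_left _ (hV h2)) hjout
      · obtain ⟨x, hx, hjx⟩ := mem_biUnion.1 h1
        exact absurd (mem_union_right _
          (mem_biUnion.2 ⟨x, (mem_sdiff.1 hx).1, hjx⟩)) hjout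
  · rintro ⟨h1, h2, h3⟩ j hjS
    by_cases hjT : j ∈ T
    · exact mem_union_left _ (mem_union_right _ (h1 (mem_inter.2 ⟨hjS, hjT⟩)))
    · by_cases hjP : j ∈ T.biUnion P
      · obtain ⟨x, hxT, hjx⟩ := mem_biUnion.1 hjP
        have hxV : x ∉ V := h2 x hxT ⟨j, mem_inter.2 ⟨hjS, hjx⟩⟩
        exact mem_union_right _ (mem_biUnion.2 ⟨x, mem_sdiff.2 ⟨hxT, hxV⟩, hjx⟩)
      · exact mem_union_left _ (mem_union_left _
          (h3 (mem_sdiff.2 ⟨hjS, fun h => (mem_union.1 h).elim hjT hjP⟩)))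

lemma wsum_zV (cfg : Cfg d m T A P) {V : Finset (Fin k)} (hV : V ⊆ T) :
    wsum d (zV A P T V) + ((T \ V).filter (fun x => lvl d x = 0)).card
      = 5 * (d + 1) * (2 ^ m - 1) := by
  have hAV : Disjoint A V := cfg.disjAT.mono_right hV
  have hAuV_bi : Disjoint (A ∪ V) ((T \ V).biUnion P) := by
    rw [Finset.disjoint_biUnion_right]
    intro x hx
    have hxT : x ∈ T := (mem_sdiff.1 hx).1
    exact Finset.disjoint_union_left.2
      ⟨(cfg.disjPA x hxT).symm, ((cfg.disjPT x hxT).mono_right hV).symm⟩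
  have hsum1 : wsum d (zV A P T V)
      = wsum d A + wsum d V + ∑ x ∈ T \ V, wsum d (P x) := by
    unfold zV wsum
    rw [Finset.sum_union hAuV_bi, Finset.sum_union hAV,
      Finset.sum_biUnion]
    intro x hx y hy hxy
    exact cfg.disjPP x ((mem_sdiff.1 (by exact_mod_cast hx)).1) y
      ((mem_sdiff.1 (by exact_mod_cast hy)).1) hxy
  have hPx : ∀ x ∈ T \ V, wsum d (P x) = if lvl d x = 0 then 0 else 2 ^ lvl d x := by
    intro x hx
    have hxT : x ∈ T := (mem_sdiff.1 hx).1
    by_cases h0 : lvl d x = 0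
    · rw [if_pos h0, cfg.p0 x hxT h0]; rfl
    · rw [if_neg h0]
      unfold wsum wt
      rw [Finset.sum_congr rfl (fun j hj => by rw [cfg.plvl x hxT j hj]), Finset.sum_const,
        smul_eq_mul, cfg.pcard x hxT (by omega)]
      have h1 : lvl d x - 1 + 1 = lvl d x := by omega
      have h2 : (2:ℕ) ^ lvl d x = 2 ^ (lvl d x - 1) * 2 := by
        conv_lhs => rw [← h1]
        rw [pow_succ]
      omega
  have hsplit : (∑ x ∈ T \ V, wsum d (P x))
      + ((T \ V).filter (fun x => lvl d x = 0)).card = wsum d (T \ V) := by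
    rw [Finset.card_filter, Finset.sum_congr rfl hPx, ← Finset.sum_add_distrib]
    apply Finset.sum_congr rfl
    intro x _
    unfold wt
    by_cases h0 : lvl d x = 0 <;> simp [h0]
  have hsdiff : wsum d (T \ V) + wsum d V = wsum d T := Finset.sum_sdiff hV
  have hwa := cfg.wA
  omega

/-! ### Alternating-sum coefficients -/

def NN (A : Finset (Fin k)) (P : Fin k → Finset (Fin k)) (T S : Finset (Fin k)) : ℤ :=
  ∑ V ∈ T.powerset, (-1) ^ V.card * (if S ⊆ zV A P T V then 1 else 0)

lemma NN_eq (cfg : Cfg d m T A P) (S : Finset (Fin k)) :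
    NN A P T S =
      if S \ (T ∪ T.biUnion P) ⊆ A
          ∧ Disjoint (S ∩ T) (T.filter fun x => (S ∩ P x).Nonempty)
          ∧ (S ∩ T) ∪ (T.filter fun x => (S ∩ P x).Nonempty) = T
      then (-1) ^ (S ∩ T).card else 0 := by
  classical
  set y := S ∩ T with hy
  set D := T.filter (fun x => (S ∩ P x).Nonempty) with hD
  set η := S \ (T ∪ T.biUnion P) ⊆ A with hηdef
  have hyT : y ⊆ T := inter_subset_right
  have hDT : D ⊆ T := filter_subset _ _
  have hiff : ∀ V ∈ T.powerset,
      (S ⊆ zV A P T V ↔ (η ∧ y ⊆ V ∧ Disjoint D V)) := by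
    intro V hVp
    have hV : V ⊆ T := mem_powerset.1 hVp
    rw [subset_zV_iff cfg hV S]
    have hmid : (∀ x ∈ T, (S ∩ P x).Nonempty → x ∉ V) ↔ Disjoint D V := by
      rw [Finset.disjoint_left]
      constructor
      · intro h x hxD
        exact h x (mem_filter.1 hxD).1 (mem_filter.1 hxD).2
      · intro h x hxT hne
        exact h (mem_filter.2 ⟨hxT, hne⟩)
    rw [hmid]
    tauto
  have hterm : ∀ V ∈ T.powerset,
      (-1:ℤ) ^ V.card * (if S ⊆ zV A P T V then 1 else 0)
        = if (η ∧ y ⊆ V ∧ Disjoint D V) then (-1:ℤ) ^ V.card else 0 := by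
    intro V hVp
    by_cases h : S ⊆ zV A P T V
    · rw [if_pos h, mul_one, if_pos ((hiff V hVp).1 h)]
    · rw [if_neg h, mul_zero, if_neg (fun hc => h ((hiff V hVp).2 hc))]
  rw [NN, Finset.sum_congr rfl hterm]
  by_cases hη : η
  · have hcong : ∀ V ∈ T.powerset,
        (if (η ∧ y ⊆ V ∧ Disjoint D V) then (-1:ℤ) ^ V.card else 0)
          = if (y ⊆ V ∧ Disjoint D V) then (-1:ℤ) ^ V.card else 0 := by
      intro V _
      exact if_congr (by tauto) rfl rfl
    rw [Finset.sum_congr rfl hcong, ← Finset.sum_filter]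
    by_cases hyD : Disjoint y D
    · have hbij : ∑ V ∈ T.powerset.filter (fun V => y ⊆ V ∧ Disjoint D V),
          (-1:ℤ) ^ V.card
          = ∑ W ∈ (T \ (y ∪ D)).powerset, (-1:ℤ) ^ (y.card + W.card) := by
        refine Finset.sum_nbij' (i := fun V => V \ y) (j := fun W => y ∪ W)
          ?_ ?_ ?_ ?_ ?_
        · intro V hV
          have h1 := mem_filter.1 hV
          have hVp : V ⊆ T := mem_powerset.1 h1.1
          have hyV := h1.2.1
          have hDV := h1.2.2
          rw [mem_powerset]
          intro j hj
          have hjV : j ∈ V := (mem_sdiff.1 hj).1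
          have hjy : j ∉ y := (mem_sdiff.1 hj).2
          rw [mem_sdiff, mem_union]
          exact ⟨hVp hjV, fun h => h.elim hjy
            (fun hD' => Finset.disjoint_left.1 hDV hD' hjV)⟩
        · intro W hW
          have hWs : W ⊆ T \ (y ∪ D) := mem_powerset.1 hW
          rw [mem_filter, mem_powerset]
          refine ⟨union_subset hyT (fun j hj => (mem_sdiff.1 (hWs hj)).1), subset_union_left, ?_⟩
          rw [Finset.disjoint_right]
          intro x hxU
          rcases mem_union.1 hxU with h1 | h1
          · exact Finset.disjoint_left.1 hyD h1
          · exact fun hD' => (mem_sdiff.1 (hWs h1)).2 (mem_union_right _ hD')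
        · intro V hV
          have hyV : y ⊆ V := (mem_filter.1 hV).2.1
          exact Finset.union_sdiff_of_subset hyV
        · intro W hW
          have hWs : W ⊆ T \ (y ∪ D) := mem_powerset.1 hW
          apply Finset.union_sdiff_cancel_left
          rw [Finset.disjoint_left]
          exact fun a ha haW => (mem_sdiff.1 (hWs haW)).2 (mem_union_left _ ha)
        · intro V hV
          have hyV : y ⊆ V := (mem_filter.1 hV).2.1
          have hc := Finset.card_sdiff_add_card_eq_card hyV
          show (-1:ℤ) ^ V.card = (-1:ℤ) ^ (y.card + (V \ y).card)
          congr 1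
          omega
      rw [hbij]
      have hpow : ∀ W ∈ (T \ (y ∪ D)).powerset,
          (-1:ℤ) ^ (y.card + W.card) = (-1:ℤ) ^ y.card * (-1:ℤ) ^ W.card :=
        fun W _ => pow_add _ _ _
      rw [Finset.sum_congr rfl hpow, ← Finset.mul_sum,
        Finset.sum_powerset_neg_one_pow_card]
      by_cases hUT : y ∪ D = T
      · rw [if_pos (by rw [Finset.sdiff_eq_empty_iff_subset, hUT]), if_pos ⟨hη, hyD, hUT⟩,
          mul_one]
      · rw [if_neg (fun h => hUT (le_antisymm (union_subset hyT hDT)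
          (Finset.sdiff_eq_empty_iff_subset.1 h))), if_neg (by tauto), mul_zero]
    · rw [if_neg (by tauto)]
      apply Finset.sum_eq_zero
      intro V hV
      exfalso
      obtain ⟨x, hxy, hxD⟩ := Finset.not_disjoint_iff.1 hyD
      have := mem_filter.1 hV
      exact Finset.disjoint_left.1 this.2.2 hxD (this.2.1 hxy)
  · rw [if_neg (by tauto)]
    apply Finset.sum_eq_zero
    intro V _
    rw [if_neg (by tauto)]

lemma NN_self (cfg : Cfg d m T A P) : NN A P T T = (-1) ^ T.card := by
  rw [NN_eq cfg T]
  have hD : T.filter (fun x => (T ∩ P x).Nonempty) = ∅ := by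
    apply Finset.filter_eq_empty_iff.2
    intro x hx hne
    obtain ⟨j, hj⟩ := hne
    exact Finset.disjoint_left.1 (cfg.disjPT x hx) (mem_inter.1 hj).2 (mem_inter.1 hj).1
  rw [hD, Finset.inter_self]
  have h1 : T \ (T ∪ T.biUnion P) = ∅ :=
    Finset.sdiff_eq_empty_iff_subset.2 subset_union_left
  rw [if_pos ⟨by rw [h1]; exact empty_subset A,
    Finset.disjoint_empty_right _, union_empty _⟩]

lemma NN_support (cfg : Cfg d m T A P) (S : Finset (Fin k)) (h : NN A P T S ≠ 0) :
    Disjoint (S ∩ T) (T.filter fun x => (S ∩ P x).Nonempty) ∧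
      (S ∩ T) ∪ (T.filter fun x => (S ∩ P x).Nonempty) = T := by
  rw [NN_eq cfg S] at h
  by_cases hc : S \ (T ∪ T.biUnion P) ⊆ A
      ∧ Disjoint (S ∩ T) (T.filter fun x => (S ∩ P x).Nonempty)
      ∧ (S ∩ T) ∪ (T.filter fun x => (S ∩ P x).Nonempty) = T
  · exact ⟨hc.2.1, hc.2.2⟩
  · rw [if_neg hc] at h
    exact absurd rfl h

/-! ### The hitting property -/

lemma hitting (d m : ℕ) (hk : k = CC d * m)
    (A : Finset (Fin k) → Finset (Fin k)) (P : Finset (Fin k) → Fin k → Finset (Fin k))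
    (hcfg : ∀ T : Finset (Fin k), T.card ≤ d → Cfg d m T (A T) (P T))
    {G : Type u} [AddCommGroup G] (c : Finset (Fin k) → G)
    (hdeg : ∀ S : Finset (Fin k), d < S.card → c S = 0)
    (hvan : ∀ T : Finset (Fin k), T.card ≤ d → ∀ V ∈ T.powerset,
      evalPoly c (toB (zV (A T) (P T) T V)) = 0) :
    ∀ T : Finset (Fin k), c T = 0 := by
  classical
  set B := d * 4 ^ m + 1 with hB
  have hmsum_le : ∀ S : Finset (Fin k), S.card ≤ d → msum d S ≤ d * 4 ^ m := by
    intro S hS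
    unfold msum
    calc ∑ j ∈ S, 4 ^ lvl d j ≤ ∑ _j ∈ S, 4 ^ m := by
          apply Finset.sum_le_sum
          intro j _
          exact Nat.pow_le_pow_right (by norm_num) (le_of_lt (lvl_lt d m hk j))
      _ = S.card * 4 ^ m := by rw [Finset.sum_const, smul_eq_mul]
      _ ≤ d * 4 ^ m := Nat.mul_le_mul_right _ hS
  -- the alternating-sum identity
  have key : ∀ T : Finset (Fin k), T.card ≤ d →
      ∑ S : Finset (Fin k), NN (A T) (P T) T S • c S = 0 := by
    intro T hT
    have h2 : ∑ V ∈ T.powerset,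
        ((-1:ℤ) ^ V.card) • evalPoly c (toB (zV (A T) (P T) T V)) = 0 :=
      Finset.sum_eq_zero (fun V hV => by rw [hvan T hT V hV, smul_zero])
    calc ∑ S : Finset (Fin k), NN (A T) (P T) T S • c S
        = ∑ S : Finset (Fin k), ∑ V ∈ T.powerset,
            ((-1:ℤ) ^ V.card * (if S ⊆ zV (A T) (P T) T V then 1 else 0)) • c S := by
          apply Finset.sum_congr rfl
          intro S _
          rw [NN, Finset.sum_smul]
      _ = ∑ S : Finset (Fin k), ∑ V ∈ T.powerset,
            ((-1:ℤ) ^ V.card) • (if S ⊆ zV (A T) (P T) T V then c S else 0) := by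
          apply Finset.sum_congr rfl
          intro S _
          apply Finset.sum_congr rfl
          intro V _
          by_cases h : S ⊆ zV (A T) (P T) T V
          · rw [if_pos h, if_pos h, mul_one]
          · rw [if_neg h, if_neg h, mul_zero, zero_smul, smul_zero]
      _ = ∑ V ∈ T.powerset, ∑ S : Finset (Fin k),
            ((-1:ℤ) ^ V.card) • (if S ⊆ zV (A T) (P T) T V then c S else 0) :=
          Finset.sum_comm
      _ = ∑ V ∈ T.powerset,
            ((-1:ℤ) ^ V.card) • evalPoly c (toB (zV (A T) (P T) T V)) := by
          apply Finset.sum_congr rfl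
          intro V _
          rw [evalPoly_toB, Finset.smul_sum]
      _ = 0 := h2
  -- the induction step
  have step : ∀ T : Finset (Fin k), T.card ≤ d →
      (∀ S : Finset (Fin k), S.card ≤ d →
        (d - S.card) * B + msum d S < (d - T.card) * B + msum d T → c S = 0) →
      c T = 0 := by
    intro T hT IH
    have cfg := hcfg T hT
    have hkey := key T hT
    rw [← Finset.add_sum_erase _ _ (mem_univ T)] at hkey
    have hrest : ∀ S ∈ (univ : Finset (Finset (Fin k))).erase T,
        NN (A T) (P T) T S • c S = 0 := by
      intro S hS
      have hST : S ≠ T := (mem_erase.1 hS).1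
      by_cases hNN : NN (A T) (P T) T S = 0
      · rw [hNN, zero_smul]
      by_cases hSd : d < S.card
      · rw [hdeg S hSd, smul_zero]
      push_neg at hSd
      -- S has small measure
      obtain ⟨hyD, hun⟩ := NN_support cfg S hNN
      set y := S ∩ T with hydef
      set D := T.filter (fun x => (S ∩ P T x).Nonempty) with hDdef
      have hyT : y ⊆ T := inter_subset_right
      have hDT : D ⊆ T := filter_subset _ _
      have hcT : T.card = y.card + D.card := by
        rw [← hun, card_union_of_disjoint hyD]
      have hD1 : ∀ x ∈ D, 1 ≤ lvl d x := by
        intro x hx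
        by_contra h0
        have hx0 : lvl d x = 0 := by omega
        have : (S ∩ P T x).Nonempty := (mem_filter.1 hx).2
        rw [cfg.p0 x (hDT hx) hx0, Finset.inter_empty] at this
        exact Finset.not_nonempty_empty this
      have hDpairs : (↑D : Set (Fin k)).PairwiseDisjoint (fun x => S ∩ P T x) := by
        intro x1 hx1 x2 hx2 hne
        exact Finset.disjoint_of_subset_left inter_subset_right
          (Finset.disjoint_of_subset_right inter_subset_right
            (cfg.disjPP x1 (hDT hx1) x2 (hDT hx2) hne))
      have hS0sub : y ∪ D.biUnion (fun x => S ∩ P T x) ⊆ S := by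
        apply union_subset inter_subset_left
        intro j hj
        obtain ⟨x, _, hjx⟩ := mem_biUnion.1 hj
        exact (mem_inter.1 hjx).1
      have hydisj : Disjoint y (D.biUnion (fun x => S ∩ P T x)) := by
        rw [Finset.disjoint_right]
        intro j hj
        obtain ⟨x, hx, hjx⟩ := mem_biUnion.1 hj
        have hjP : j ∈ P T x := (mem_inter.1 hjx).2
        intro hjy
        exact Finset.disjoint_left.1 (cfg.disjPT x (hDT hx)) hjP
          (mem_inter.1 hjy).2
      have hcardS0 : (y ∪ D.biUnion (fun x => S ∩ P T x)).card
          = y.card + ∑ x ∈ D, (S ∩ P T x).card := by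
        rw [card_union_of_disjoint hydisj, Finset.card_biUnion hDpairs]
      have hone_le : ∀ x ∈ D, 1 ≤ (S ∩ P T x).card := by
        intro x hx
        exact Finset.card_pos.2 (mem_filter.1 hx).2
      have hsum_ge : D.card ≤ ∑ x ∈ D, (S ∩ P T x).card := by
        calc D.card = ∑ _x ∈ D, 1 := by rw [Finset.sum_const, smul_eq_mul, mul_one]
          _ ≤ ∑ x ∈ D, (S ∩ P T x).card := Finset.sum_le_sum hone_le
      have hScard_ge : T.card ≤ S.card := by
        calc T.card = y.card + D.card := hcT
          _ ≤ y.card + ∑ x ∈ D, (S ∩ P T x).card := by omega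
          _ = (y ∪ D.biUnion (fun x => S ∩ P T x)).card := hcardS0.symm
          _ ≤ S.card := card_le_card hS0sub
      by_cases hlt : T.card < S.card
      · -- cardinality strictly bigger: measure drops thanks to the B-block
        have h1 : msum d S < B := by
          have := hmsum_le S hSd
          omega
        have h2 : (d - S.card) + 1 ≤ d - T.card := by omega
        have : (d - S.card) * B + msum d S < ((d - S.card) + 1) * B := by
          have : ((d - S.card) + 1) * B = (d - S.card) * B + B := by ring
          omega
        have h3 : ((d - S.card) + 1) * B ≤ (d - T.card) * B :=
          Nat.mul_le_mul_right _ h2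
        have hfin : (d - S.card) * B + msum d S < (d - T.card) * B + msum d T := by
          calc (d - S.card) * B + msum d S < (d - S.card) * B + B := by omega
            _ = ((d - S.card) + 1) * B := by ring
            _ ≤ (d - T.card) * B := h3
            _ ≤ (d - T.card) * B + msum d T := Nat.le_add_right _ _
        rw [IH S hSd hfin, smul_zero]
      · -- same cardinality: the level multiset drops
        have hSeqT : S.card = T.card := by omega
        have hsum_eq : ∑ x ∈ D, (S ∩ P T x).card = D.card := by
          have hle2 : y.card + ∑ x ∈ D, (S ∩ P T x).card ≤ S.card :=
            hcardS0 ▸ card_le_card hS0sub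
          omega
        have hS0card : (y ∪ D.biUnion (fun x => S ∩ P T x)).card = S.card := by
          rw [hcardS0, hsum_eq]
          omega
        have hSeq : S = y ∪ D.biUnion (fun x => S ∩ P T x) :=
          (Finset.eq_of_subset_of_card_le hS0sub (le_of_eq hS0card.symm)).symm
        have hone : ∀ x ∈ D, (S ∩ P T x).card = 1 := by
          by_contra hcon
          push_neg at hcon
          obtain ⟨x0, hx0, hx0ne⟩ := hcon
          have : ∑ _x ∈ D, 1 < ∑ x ∈ D, (S ∩ P T x).card := by
            apply Finset.sum_lt_sum hone_le
            exact ⟨x0, hx0, by have := hone_le x0 hx0; omega⟩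
          rw [Finset.sum_const, smul_eq_mul, mul_one, hsum_eq] at this
          omega
        have hDne : D.Nonempty := by
          rw [Finset.nonempty_iff_ne_empty]
          intro hDe
          rw [hDe, union_empty] at hun
          have hTS : T ⊆ S := by
            rw [← hun]
            exact inter_subset_left
          exact hST (Finset.eq_of_subset_of_card_le hTS (by omega)).symm
        have hmS : msum d S = msum d y + ∑ x ∈ D, msum d (S ∩ P T x) := by
          conv_lhs => rw [hSeq]
          unfold msum
          rw [Finset.sum_union hydisj, Finset.sum_biUnion hDpairs]
        have hmT : msum d T = msum d y + ∑ x ∈ D, 4 ^ lvl d x := by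
          rw [← hun]
          unfold msum
          rw [Finset.sum_union hyD]
        have hterm : ∀ x ∈ D, msum d (S ∩ P T x) < 4 ^ lvl d x := by
          intro x hx
          obtain ⟨j, hj⟩ := Finset.card_eq_one.1 (hone x hx)
          rw [hj]
          unfold msum
          rw [Finset.sum_singleton]
          have hjP : j ∈ P T x := by
            have : j ∈ S ∩ P T x := hj ▸ mem_singleton_self j
            exact (mem_inter.1 this).2
          rw [cfg.plvl x (hDT hx) j hjP]
          have hx1 := hD1 x hx
          have : lvl d x - 1 < lvl d x := by omega
          exact Nat.pow_lt_pow_right (by norm_num) this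
        have hmlt : msum d S < msum d T := by
          rw [hmS, hmT]
          have : ∑ x ∈ D, msum d (S ∩ P T x) < ∑ x ∈ D, 4 ^ lvl d x :=
            Finset.sum_lt_sum_of_nonempty hDne hterm
          omega
        have hfin : (d - S.card) * B + msum d S < (d - T.card) * B + msum d T := by
          rw [hSeqT]
          omega
        rw [IH S hSd hfin, smul_zero]
    rw [Finset.sum_eq_zero hrest, add_zero, NN_self cfg] at hkey
    -- now ((-1)^T.card) • c T = 0
    have hsq : ((-1:ℤ) ^ T.card) • (((-1:ℤ) ^ T.card) • c T) = c T := by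
      rw [smul_smul, ← pow_add]
      have : Even (T.card + T.card) := ⟨T.card, by ring⟩
      rw [this.neg_one_pow, one_smul]
    rw [← hsq, hkey, smul_zero]
  -- strong induction on the measure
  have main : ∀ n : ℕ, ∀ T : Finset (Fin k), T.card ≤ d →
      (d - T.card) * B + msum d T < n → c T = 0 := by
    intro n
    induction n with
    | zero => intro T _ h; omega
    | succ n ih =>
      intro T hT hn
      apply step T hT
      intro S hS hlt
      exact ih S hS (by omega)
  intro T
  by_cases hT : T.card ≤ d
  · exact main ((d - T.card) * B + msum d T + 1) T hT (by omega)
  · exact hdeg T (by omega)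

end Core

end Stmt5

/-- Weight-balanced hitting set: for every degree `d` there are a constant `Cd`
(the `O_d(·)` constant) and an absolute constant `γ > 0` (the `Ω(·)` constant) such
that for every dimension `k` divisible by `10(d+1)` there exist positive integer
weights `w₁, …, w_k` with total `W` and a set `S ⊆ {0,1}^k` of size at most
`Cd · k^d`, all of whose points `y` satisfy `|Σ w_j y_j − W/2| ≤ W / 2^(γ k/(d+1))`,
and such that every non-zero degree-`d` polynomial over every Abelian group is
non-zero at some point of `S`. -/
theorem stmt5 (d : ℕ) :
    ∃ Cd : ℝ, ∃ γ : ℝ, 0 < γ ∧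
      ∀ k : ℕ, 0 < k → 10 * (d + 1) ∣ k →
        ∃ w : Fin k → ℕ, (∀ j, 0 < w j) ∧
          ∃ S : Finset (Fin k → Bool),
            (S.card : ℝ) ≤ Cd * (k : ℝ) ^ d ∧
            (∀ y ∈ S,
              |(∑ j, (w j : ℝ) * (if y j then 1 else 0)) - (∑ j, (w j : ℝ)) / 2|
                ≤ (∑ j, (w j : ℝ)) / (2 : ℝ) ^ (γ * (k : ℝ) / ((d : ℝ) + 1))) ∧
            (∀ (G : Type u) [AddCommGroup G] (c : Finset (Fin k) → G),
              (∀ T : Finset (Fin k), d < T.card → c T = 0) → c ≠ 0 →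
                ∃ z ∈ S, evalPoly c z ≠ 0) := by
  classical
  refine ⟨((d : ℝ) + 1) * 2 ^ d, 1 / 20, by norm_num, ?_⟩
  intro k hk0 hdvd
  obtain ⟨m, hk⟩ := hdvd
  have hk : k = Stmt5.CC d * m := hk
  have hm0 : 0 < m := by
    rcases Nat.eq_zero_or_pos m with h | h
    · rw [h, mul_zero] at hk; omega
    · exact h
  have h2m : 2 ≤ 2 ^ m := by
    calc 2 = 2 ^ 1 := (pow_one 2).symm
      _ ≤ 2 ^ m := Nat.pow_le_pow_right (by norm_num) hm0
  refine ⟨Stmt5.wt d, fun j => Nat.pow_pos (by norm_num), ?_⟩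
  -- choose configurations
  have hconf : ∀ T : Finset (Fin k), ∃ AP : Finset (Fin k) × (Fin k → Finset (Fin k)),
      T.card ≤ d → Stmt5.Cfg d m T AP.1 AP.2 := by
    intro T
    by_cases hT : T.card ≤ d
    · obtain ⟨A, P, hAP⟩ := Stmt5.config d m hk T hT
      exact ⟨(A, P), fun _ => hAP⟩
    · exact ⟨(∅, fun _ => ∅), fun h => absurd h hT⟩
  choose F hF using hconf
  set A : Finset (Fin k) → Finset (Fin k) := fun T => (F T).1 with hA
  set P : Finset (Fin k) → Fin k → Finset (Fin k) := fun T => (F T).2 with hP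
  set Ts : Finset (Finset (Fin k)) :=
    (univ : Finset (Finset (Fin k))).filter (fun T => T.card ≤ d) with hTs
  refine ⟨Ts.biUnion (fun T => T.powerset.image
      (fun V => Stmt5.toB (Stmt5.zV (A T) (P T) T V))), ?_, ?_, ?_⟩
  · -- cardinality bound
    have h1 : (Ts.biUnion (fun T => T.powerset.image
          (fun V => Stmt5.toB (Stmt5.zV (A T) (P T) T V)))).card
        ≤ ∑ T ∈ Ts, (T.powerset.image
          (fun V => Stmt5.toB (Stmt5.zV (A T) (P T) T V))).card :=
      Finset.card_biUnion_le
    have h2 : ∀ T ∈ Ts, (T.powerset.image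
        (fun V => Stmt5.toB (Stmt5.zV (A T) (P T) T V))).card ≤ 2 ^ d := by
      intro T hT
      calc (T.powerset.image (fun V => Stmt5.toB (Stmt5.zV (A T) (P T) T V))).card
          ≤ T.powerset.card := Finset.card_image_le
        _ = 2 ^ T.card := Finset.card_powerset T
        _ ≤ 2 ^ d := Nat.pow_le_pow_right (by norm_num) (Finset.mem_filter.1 hT).2
    have h3 : Ts.card ≤ (d + 1) * k ^ d := by
      have hsub : Ts ⊆ (range (d+1)).biUnion
          (fun i => Finset.powersetCard i (univ : Finset (Fin k))) := by
        intro T hT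
        rw [mem_biUnion]
        refine ⟨T.card, mem_range.2 (by have := (Finset.mem_filter.1 hT).2; omega),
          Finset.mem_powersetCard.2 ⟨subset_univ T, rfl⟩⟩
      calc Ts.card ≤ ((range (d+1)).biUnion
            (fun i => Finset.powersetCard i (univ : Finset (Fin k)))).card :=
            Finset.card_le_card hsub
        _ ≤ ∑ i ∈ range (d+1), (Finset.powersetCard i (univ : Finset (Fin k))).card :=
            Finset.card_biUnion_le
        _ = ∑ i ∈ range (d+1), Nat.choose k i := by
            apply Finset.sum_congr rfl
            intro i _
            rw [Finset.card_powersetCard, Finset.card_univ, Fintype.card_fin]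
        _ ≤ ∑ _i ∈ range (d+1), k ^ d := by
            apply Finset.sum_le_sum
            intro i hi
            calc Nat.choose k i ≤ k ^ i := Nat.choose_le_pow k i
              _ ≤ k ^ d := Nat.pow_le_pow_right hk0 (by
                  have := mem_range.1 hi; omega)
        _ = (d + 1) * k ^ d := by
            rw [Finset.sum_const, Finset.card_range, smul_eq_mul]
    have hN : (Ts.biUnion (fun T => T.powerset.image
          (fun V => Stmt5.toB (Stmt5.zV (A T) (P T) T V)))).card
        ≤ (d + 1) * k ^ d * 2 ^ d := by
      calc _ ≤ ∑ T ∈ Ts, (T.powerset.image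
            (fun V => Stmt5.toB (Stmt5.zV (A T) (P T) T V))).card := h1
        _ ≤ ∑ _T ∈ Ts, 2 ^ d := Finset.sum_le_sum h2
        _ = Ts.card * 2 ^ d := by rw [Finset.sum_const, smul_eq_mul]
        _ ≤ (d + 1) * k ^ d * 2 ^ d := Nat.mul_le_mul_right _ h3
    calc ((Ts.biUnion (fun T => T.powerset.image
          (fun V => Stmt5.toB (Stmt5.zV (A T) (P T) T V)))).card : ℝ)
        ≤ (((d + 1) * k ^ d * 2 ^ d : ℕ) : ℝ) := Nat.cast_le.2 hN
      _ = ((d : ℝ) + 1) * 2 ^ d * (k : ℝ) ^ d := by push_cast; ring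
  · -- balance
    intro y hy
    obtain ⟨T, hTmem, hy2⟩ := mem_biUnion.1 hy
    obtain ⟨V, hVmem, rfl⟩ := Finset.mem_image.1 hy2
    have hT : T.card ≤ d := (Finset.mem_filter.1 hTmem).2
    have hV : V ⊆ T := Finset.mem_powerset.1 hVmem
    have cfg := hF T hT
    have hw := Stmt5.wsum_zV cfg hV
    set z := Stmt5.zV (A T) (P T) T V with hz
    set e := ((T \ V).filter (fun x => Stmt5.lvl d x = 0)).card with he
    have heD : e ≤ d :=
      le_trans (Finset.card_filter_le _ _)
        (le_trans (Finset.card_le_card sdiff_subset) hT)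
    -- rewrite the two sums
    have hsum1 : (∑ j, (Stmt5.wt d j : ℝ) * (if Stmt5.toB z j then 1 else 0))
        = ((Stmt5.wsum d z : ℕ) : ℝ) := by
      have hstep : ∀ j : Fin k, (Stmt5.wt d j : ℝ) * (if Stmt5.toB z j then 1 else 0)
          = if j ∈ z then (Stmt5.wt d j : ℝ) else 0 := by
        intro j
        by_cases hj : j ∈ z <;> simp [Stmt5.toB, hj]
      rw [show (∑ j, (Stmt5.wt d j : ℝ) * (if Stmt5.toB z j then 1 else 0))
          = ∑ j, (if j ∈ z then (Stmt5.wt d j : ℝ) else 0)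
          from Finset.sum_congr rfl (fun j _ => hstep j)]
      rw [Finset.sum_ite_mem, Finset.univ_inter, Stmt5.wsum, Nat.cast_sum]
    have hsum2 : (∑ j : Fin k, (Stmt5.wt d j : ℝ))
        = ((Stmt5.CC d * (2 ^ m - 1) : ℕ) : ℝ) := by
      rw [← Stmt5.wsum_univ d m hk, Stmt5.wsum, Nat.cast_sum]
    rw [hsum1, hsum2]
    -- numerical facts
    have hzval : (Stmt5.wsum d z : ℝ) = 5 * ((d:ℝ) + 1) * ((2:ℝ) ^ m - 1) - (e : ℝ) := by
      have h1 : ((Stmt5.wsum d z + e : ℕ) : ℝ) = ((5 * (d + 1) * (2 ^ m - 1) : ℕ) : ℝ) := by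
        exact_mod_cast congrArg (Nat.cast : ℕ → ℝ) hw
      push_cast [Nat.cast_sub (by omega : 1 ≤ 2 ^ m)] at h1
      linarith
    have hWval : ((Stmt5.CC d * (2 ^ m - 1) : ℕ) : ℝ)
        = 10 * ((d:ℝ) + 1) * ((2:ℝ) ^ m - 1) := by
      push_cast [Nat.cast_sub (by omega : 1 ≤ 2 ^ m)]
      ring
    rw [hWval, hzval]
    have habs : |5 * ((d:ℝ) + 1) * ((2:ℝ) ^ m - 1) - (e : ℝ)
        - 10 * ((d:ℝ) + 1) * ((2:ℝ) ^ m - 1) / 2| = (e : ℝ) := by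
      rw [abs_sub_comm]
      rw [show 10 * ((d:ℝ) + 1) * ((2:ℝ) ^ m - 1) / 2
          - (5 * ((d:ℝ) + 1) * ((2:ℝ) ^ m - 1) - (e : ℝ)) = (e : ℝ) by ring]
      exact abs_of_nonneg (Nat.cast_nonneg e)
    rw [habs]
    -- exponent equality
    have hexp : (1 / 20 : ℝ) * (k : ℝ) / ((d : ℝ) + 1) = (m : ℝ) / 2 := by
      have hkr : (k : ℝ) = 10 * ((d : ℝ) + 1) * (m : ℝ) := by
        rw [hk]
        push_cast
        ring
      rw [hkr]
      have : ((d : ℝ) + 1) ≠ 0 := by positivity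
      field_simp
      ring
    rw [hexp]
    have hrle : (2 : ℝ) ^ ((m : ℝ) / 2) ≤ (2 : ℝ) ^ (m : ℝ) :=
      Real.rpow_le_rpow_of_exponent_le (by norm_num)
        (by
          have : (0:ℝ) ≤ (m:ℝ) := Nat.cast_nonneg m
          linarith)
    have hrpos : (0 : ℝ) < (2 : ℝ) ^ ((m : ℝ) / 2) :=
      Real.rpow_pos_of_pos (by norm_num) _
    rw [le_div_iff₀ hrpos]
    -- d * 2^(m/2) ≤ W
    have hNineq : (d : ℝ) * (2 : ℝ) ^ (m : ℕ) ≤ 10 * ((d:ℝ) + 1) * ((2:ℝ) ^ m - 1) := by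
      have hnat : d * 2 ^ m ≤ 10 * (d + 1) * (2 ^ m - 1) := by
        have hx : (2 ^ m : ℕ) ≤ 2 * (2 ^ m - 1) := by omega
        calc d * 2 ^ m ≤ 5 * (d + 1) * 2 ^ m := Nat.mul_le_mul_right _ (by omega)
          _ ≤ 5 * (d + 1) * (2 * (2 ^ m - 1)) := Nat.mul_le_mul_left _ hx
          _ = 10 * (d + 1) * (2 ^ m - 1) := by ring
      calc (d : ℝ) * (2 : ℝ) ^ (m : ℕ) = ((d * 2 ^ m : ℕ) : ℝ) := by push_cast; ring
        _ ≤ ((10 * (d + 1) * (2 ^ m - 1) : ℕ) : ℝ) := Nat.cast_le.2 hnat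
        _ = 10 * ((d:ℝ) + 1) * ((2:ℝ) ^ m - 1) := by
            push_cast [Nat.cast_sub (by omega : 1 ≤ 2 ^ m)]
            ring
    calc (e : ℝ) * (2 : ℝ) ^ ((m : ℝ) / 2)
        ≤ (d : ℝ) * (2 : ℝ) ^ ((m : ℝ) / 2) := by
          apply mul_le_mul_of_nonneg_right _ (le_of_lt hrpos)
          exact_mod_cast heD
      _ ≤ (d : ℝ) * (2 : ℝ) ^ (m : ℝ) := by
          apply mul_le_mul_of_nonneg_left _ (Nat.cast_nonneg d)
          linarith
      _ = (d : ℝ) * (2 : ℝ) ^ (m : ℕ) := by rw [Real.rpow_natCast]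
      _ ≤ 10 * ((d:ℝ) + 1) * ((2:ℝ) ^ m - 1) := hNineq
  · -- hitting
    intro G _ c hdeg hc
    by_contra hno
    push_neg at hno
    have hall : ∀ T : Finset (Fin k), c T = 0 := by
      apply Stmt5.hitting d m hk A P (fun T hT => hF T hT) c hdeg
      intro T hT V hV
      apply hno
      exact mem_biUnion.2 ⟨T, Finset.mem_filter.2 ⟨mem_univ T, hT⟩,
        Finset.mem_image.2 ⟨V, hV, rfl⟩⟩
    exact hc (funext hall)
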